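/- Let E be a finite-dimensional real inner product space, let F : E → ℝ and Φ : E → ℝ be differentiable with F ≥ 0 and Φ ≥ 0, and let g : ℝ → ℝ be monotone nondecreasing with g(0) = 0. Let w : [0,∞) → E be a gradient-flow trajectory of F, i.e. w is differentiable with w'(s) = −∇F(w(s)) for all s ≥ 0. If ⟨∇Φ(w(s)), ∇F(w(s))⟩ ≥ g(F(w(s))) for every s ≥ 0, then for every t > 0 one has g(F(w(t))) ≤ Φ(w(0)) / t. -/

import Mathlib

open RealInnerProductSpace

/-- From admissible potentials to gradient flow rates. -/
theorem potential_to_gradient_flow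
    {E : Type*} [NormedAddCommGroup E] [InnerProductSpace ℝ E] [FiniteDimensional ℝ E]
    (F Φ : E → ℝ) (hF : Differentiable ℝ F) (hΦ : Differentiable ℝ Φ)
    (hFnonneg : ∀ u, 0 ≤ F u) (hΦnonneg : ∀ u, 0 ≤ Φ u)
    (g : ℝ → ℝ) (hg : Monotone g) (hg0 : g 0 = 0)
    (w : ℝ → E)
    (hw : ∀ s : ℝ, 0 ≤ s → HasDerivAt w (-gradient F (w s)) s)
    (hadm : ∀ s : ℝ, 0 ≤ s → g (F (w s)) ≤ ⟪gradient Φ (w s), gradient F (w s)⟫) :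
    ∀ t : ℝ, 0 < t → g (F (w t)) ≤ Φ (w 0) / t := by
  intro t ht
  -- derivative of F ∘ w
  have hFw : ∀ s : ℝ, 0 ≤ s →
      HasDerivAt (fun s => F (w s)) ⟪gradient F (w s), -gradient F (w s)⟫ s := by
    intro s hs
    have := ((hF (w s)).hasGradientAt.hasFDerivAt).comp_hasDerivAt s (hw s hs)
    exact this
  have hΦw : ∀ s : ℝ, 0 ≤ s →
      HasDerivAt (fun s => Φ (w s)) ⟪gradient Φ (w s), -gradient F (w s)⟫ s := by
    intro s hs
    have := ((hΦ (w s)).hasGradientAt.hasFDerivAt).comp_hasDerivAt s (hw s hs)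
    exact this
  -- F ∘ w is antitone on [0, ∞)
  have hanti : AntitoneOn (fun s => F (w s)) (Set.Ici (0:ℝ)) := by
    apply antitoneOn_of_deriv_nonpos (convex_Ici 0)
    · exact fun s hs => ((hFw s hs).continuousAt).continuousWithinAt
    · intro s hs
      rw [interior_Ici] at hs
      exact (hFw s (le_of_lt hs)).differentiableAt.differentiableWithinAt
    · intro s hs
      rw [interior_Ici] at hs
      rw [(hFw s hs.le).deriv]
      rw [inner_neg_right]
      simpa using real_inner_self_nonneg
  have hFle : F (w t) ≤ F (w 0) := hanti Set.self_mem_Ici (le_of_lt ht) ht.le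
  -- key: h s = Φ (w s) + s * g (F (w t)) is antitone on [0, t]
  have hkey : AntitoneOn (fun s => Φ (w s) + s * g (F (w t))) (Set.Icc (0:ℝ) t) := by
    apply antitoneOn_of_deriv_nonpos (convex_Icc 0 t)
    · intro s hs
      exact ((hΦw s hs.1).continuousAt.add (by fun_prop)).continuousWithinAt
    · intro s hs
      rw [interior_Icc] at hs
      have hd' : HasDerivAt (fun s => Φ (w s) + s * g (F (w t)))
          (⟪gradient Φ (w s), -gradient F (w s)⟫ + g (F (w t))) s := by
        exact ((hΦw s hs.1.le).add ((hasDerivAt_id s).mul_const (g (F (w t))))).congr_deriv (by ring)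
      exact hd'.differentiableAt.differentiableWithinAt
    · intro s hs
      rw [interior_Icc] at hs
      have hd : HasDerivAt (fun s => Φ (w s) + s * g (F (w t)))
          (⟪gradient Φ (w s), -gradient F (w s)⟫ + g (F (w t))) s := by
        exact ((hΦw s hs.1.le).add ((hasDerivAt_id s).mul_const (g (F (w t))))).congr_deriv (by ring)
      rw [hd.deriv]
      have h1 : g (F (w t)) ≤ g (F (w s)) :=
        hg (hanti (Set.mem_Ici.2 hs.1.le) (Set.mem_Ici.2 ht.le) hs.2.le)
      have h2 := hadm s hs.1.le
      rw [inner_neg_right]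
      linarith
  have := hkey (Set.left_mem_Icc.2 ht.le) (Set.right_mem_Icc.2 ht.le) ht.le
  simp only [zero_mul, add_zero] at this
  have hΦt := hΦnonneg (w t)
  rw [le_div_iff₀ ht]
  nlinarith
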